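/- Let 𝒢 be a transitive subgroup of S₅ and let t ≥ 0. Then every group homomorphism from the semidirect product Gᵗ ⋊ 𝒢 (for the diagonal action of 𝒢 on Gᵗ) to a commutative group is trivial on the subgroup Gᵗ ⋊ {1}; equivalently, the commutator subgroup of Gᵗ ⋊ 𝒢 contains Gᵗ ⋊ {1}. -/

import Mathlib

set_option synthInstance.maxHeartbeats 1000000
set_option maxHeartbeats 1000000

def Gsub : Submodule (ZMod 2) (Fin 5 → ZMod 2) where
  carrier := {v | ∑ i, v i = 0}
  add_mem' := by
    intro a b ha hb
    simp only [Set.mem_setOf_eq] at *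
    simp [Finset.sum_add_distrib, ha, hb]
  zero_mem' := by simp
  smul_mem' := by
    intro c a ha
    simp only [Set.mem_setOf_eq] at *
    simp [← Finset.mul_sum, ha]

def permSMulG (π : Equiv.Perm (Fin 5)) (v : Gsub) : Gsub :=
  ⟨fun j => (v : Fin 5 → ZMod 2) (π⁻¹ j), by
    have h : ∑ j, (v : Fin 5 → ZMod 2) (π⁻¹ j) = ∑ j, (v : Fin 5 → ZMod 2) j :=
      Equiv.sum_comp π⁻¹ _
    show ∑ j, (v : Fin 5 → ZMod 2) (π⁻¹ j) = 0
    rw [h]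
    exact v.2⟩

lemma permSMulG_mul (σ τ : Equiv.Perm (Fin 5)) (v : Gsub) :
    permSMulG (σ * τ) v = permSMulG σ (permSMulG τ v) := by
  apply Subtype.ext
  funext j
  show (v : Fin 5 → ZMod 2) ((σ * τ)⁻¹ j) = (v : Fin 5 → ZMod 2) (τ⁻¹ (σ⁻¹ j))
  rw [mul_inv_rev]
  rfl

/-- The diagonal action of a permutation on `Gᵗ` as an additive automorphism. -/
def diagAddAut (π : Equiv.Perm (Fin 5)) (t : ℕ) : (Fin t → Gsub) ≃+ (Fin t → Gsub) where
  toFun f := fun i => permSMulG π (f i)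
  invFun f := fun i => permSMulG π⁻¹ (f i)
  left_inv f := by
    funext i
    apply Subtype.ext
    funext j
    simp [permSMulG]
  right_inv f := by
    funext i
    apply Subtype.ext
    funext j
    simp [permSMulG]
  map_add' a b := rfl

/-- The diagonal action of `𝒢` on `Gᵗ` as a homomorphism to the automorphism group. -/
def diagAut (𝒢 : Subgroup (Equiv.Perm (Fin 5))) (t : ℕ) :
    𝒢 →* MulAut (Multiplicative (Fin t → Gsub)) where
  toFun σ := AddEquiv.toMultiplicative (diagAddAut (σ : Equiv.Perm (Fin 5)) t)
  map_one' := by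
    apply MulEquiv.ext
    intro v
    rfl
  map_mul' := by
    intro σ τ
    apply MulEquiv.ext
    intro v
    show Multiplicative.ofAdd
        (diagAddAut ((σ * τ : 𝒢) : Equiv.Perm (Fin 5)) t (Multiplicative.toAdd v)) =
      Multiplicative.ofAdd (diagAddAut (σ : Equiv.Perm (Fin 5)) t
        (diagAddAut (τ : Equiv.Perm (Fin 5)) t (Multiplicative.toAdd v)))
    have : diagAddAut ((σ * τ : 𝒢) : Equiv.Perm (Fin 5)) t (Multiplicative.toAdd v) =
        diagAddAut (σ : Equiv.Perm (Fin 5)) t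
          (diagAddAut (τ : Equiv.Perm (Fin 5)) t (Multiplicative.toAdd v)) := by
      funext i
      show permSMulG ((σ : Equiv.Perm (Fin 5)) * (τ : Equiv.Perm (Fin 5))) _ = _
      rw [permSMulG_mul]
      rfl
    rw [this]


section Aux

open SemidirectProduct

lemma gsub_add_self (x : Gsub) : x + x = 0 := by
  apply Subtype.ext
  show (x : Fin 5 → ZMod 2) + (x : Fin 5 → ZMod 2) = 0
  funext j
  exact CharTwo.add_self_eq_zero _

lemma gsub_neg_eq (x : Gsub) : -x = x :=
  neg_eq_of_add_eq_zero_left (gsub_add_self x)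

lemma gsub_sub_eq_add (x y : Gsub) : x - y = x + y := by
  rw [sub_eq_add_neg, gsub_neg_eq]

/-- The basic zero-sum vector `e_i + e_j`. -/
def vv (i j : Fin 5) : Gsub :=
  ⟨Pi.single i 1 + Pi.single j 1, by
    show ∑ k, (Pi.single i 1 + Pi.single j 1 : Fin 5 → ZMod 2) k = 0
    simp [Finset.sum_add_distrib]
    decide⟩

lemma perm_vv (π : Equiv.Perm (Fin 5)) (i j : Fin 5) :
    permSMulG π (vv i j) = vv (π i) (π j) := by
  apply Subtype.ext
  funext k
  show ((vv i j : Fin 5 → ZMod 2)) (π⁻¹ k) = (vv (π i) (π j) : Fin 5 → ZMod 2) k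
  show (Pi.single i 1 + Pi.single j 1 : Fin 5 → ZMod 2) (π⁻¹ k)
      = (Pi.single (π i) 1 + Pi.single (π j) 1 : Fin 5 → ZMod 2) k
  simp [Pi.single_apply, Equiv.Perm.inv_eq_iff_eq, Equiv.symm_apply_eq]

lemma sum_vv_zero (π : Equiv.Perm (Fin 5)) : ∑ i, vv i (π i) = 0 := by
  apply Subtype.ext
  have hcoe : ((∑ i, vv i (π i) : Gsub) : Fin 5 → ZMod 2)
      = ∑ i, ((vv i (π i) : Fin 5 → ZMod 2)) := by
    simp
  rw [hcoe]
  show ∑ i, (Pi.single i 1 + Pi.single (π i) 1 : Fin 5 → ZMod 2) = 0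
  rw [Finset.sum_add_distrib]
  have : ∑ i, (Pi.single (π i) 1 : Fin 5 → ZMod 2) = ∑ i, Pi.single i 1 :=
    Equiv.sum_comp π (fun i => (Pi.single i 1 : Fin 5 → ZMod 2))
  rw [this]
  funext k
  simp only [Pi.add_apply, Pi.zero_apply]
  exact CharTwo.add_self_eq_zero _

lemma gsub_span (v : Gsub) :
    v = ∑ j, ((v : Fin 5 → ZMod 2) j) • vv 0 j := by
  apply Subtype.ext
  have hcoe : ((∑ j, ((v : Fin 5 → ZMod 2) j) • vv 0 j : Gsub) : Fin 5 → ZMod 2)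
      = ∑ j, ((v : Fin 5 → ZMod 2) j) • ((vv 0 j : Fin 5 → ZMod 2)) := by
    simp
  rw [hcoe]
  funext k
  have hv := v.2
  show (v : Fin 5 → ZMod 2) k
      = ∑ j, ((v : Fin 5 → ZMod 2) j) • ((Pi.single 0 1 + Pi.single j 1 : Fin 5 → ZMod 2)) k
  simp only [Pi.add_apply, Pi.smul_apply, smul_eq_mul, Pi.single_apply, mul_add,
    mul_ite, mul_one, mul_zero]
  rw [Finset.sum_add_distrib]
  rw [Finset.sum_ite_eq Finset.univ k (fun j => (v : Fin 5 → ZMod 2) j)]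
  simp only [Finset.mem_univ, if_true]
  have hsum : (∑ j, if k = 0 then (v : Fin 5 → ZMod 2) j else 0)
      = if k = 0 then ∑ j, (v : Fin 5 → ZMod 2) j else 0 := by
    split <;> simp
  rw [hsum]
  have hv' : ∑ j, (v : Fin 5 → ZMod 2) j = 0 := hv
  rw [hv']
  simp

lemma gsub_five_smul (x : Gsub) : (5 : ℕ) • x = x := by
  have h2 : (2 : ℕ) • x = 0 := by rw [two_nsmul]; exact gsub_add_self x
  have h : (5 : ℕ) • x = (2 : ℕ) • x + ((2 : ℕ) • x + (1 : ℕ) • x) := by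
    rw [← add_nsmul, ← add_nsmul]
  rw [h, h2, one_nsmul, zero_add, zero_add]

lemma gsub_smul_mem (L : AddSubgroup Gsub) (c : ZMod 2) {x : Gsub} (hx : x ∈ L) :
    c • x ∈ L := by
  fin_cases c
  · show (0 : ZMod 2) • x ∈ L
    rw [zero_smul]; exact L.zero_mem
  · show (1 : ZMod 2) • x ∈ L
    rw [one_smul]; exact hx

/-- Core lemma: an additive subgroup of `G` containing all `π v + v` for `π` in a
transitive subgroup is everything. -/
lemma core_lemma (𝒢 : Subgroup (Equiv.Perm (Fin 5)))
    (htrans : ∀ i j : Fin 5, ∃ π ∈ 𝒢, π i = j)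
    (L : AddSubgroup Gsub)
    (hD : ∀ π ∈ 𝒢, ∀ v : Gsub, permSMulG π v + v ∈ L) (v : Gsub) : v ∈ L := by
  -- step 1: vv (π i) (π j) + vv i j ∈ L
  have step1 : ∀ π ∈ 𝒢, ∀ i j, vv (π i) (π j) + vv i j ∈ L := by
    intro π hπ i j
    have := hD π hπ (vv i j)
    rwa [perm_vv] at this
  -- step 2: vv i (π i) + vv j (π j) ∈ L
  have step2 : ∀ π ∈ 𝒢, ∀ i j, vv i (π i) + vv j (π j) ∈ L := by
    intro π hπ i j
    have hid : vv i (π i) + vv j (π j) = vv (π i) (π j) + vv i j := by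
      apply Subtype.ext
      show ((vv i (π i) : Fin 5 → ZMod 2)) + vv j (π j)
          = ((vv (π i) (π j) : Fin 5 → ZMod 2)) + vv i j
      show (Pi.single i 1 + Pi.single (π i) 1) + (Pi.single j 1 + Pi.single (π j) 1)
          = (Pi.single (π i) 1 + Pi.single (π j) 1) + (Pi.single i 1 + Pi.single j 1)
      abel
    rw [hid]
    exact step1 π hπ i j
  -- step 3: vv 0 (π 0) ∈ L
  have step3 : ∀ π ∈ 𝒢, vv 0 (π 0) ∈ L := by
    intro π hπ
    have key : vv 0 (π 0) = ∑ i, (vv i (π i) + vv 0 (π 0)) := by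
      rw [Finset.sum_add_distrib, sum_vv_zero π, zero_add, Finset.sum_const,
        Finset.card_univ, Fintype.card_fin]
      exact (gsub_five_smul _).symm
    rw [key]
    exact AddSubgroup.sum_mem L (fun i _ => step2 π hπ i 0)
  -- step 4: vv 0 j ∈ L for all j
  have step4 : ∀ j, vv 0 j ∈ L := by
    intro j
    obtain ⟨π, hπ, hπ0⟩ := htrans 0 j
    have := step3 π hπ
    rwa [hπ0] at this
  -- conclude
  rw [gsub_span v]
  exact AddSubgroup.sum_mem L (fun j _ => gsub_smul_mem L _ (step4 j))

lemma diagAddAut_single (π : Equiv.Perm (Fin 5)) (t : ℕ) (i : Fin t) (v : Gsub) :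
    diagAddAut π t (Pi.single i v) = Pi.single i (permSMulG π v) := by
  have h0 : permSMulG π 0 = 0 := by
    apply Subtype.ext
    funext k
    rfl
  funext j
  show permSMulG π ((Pi.single i v : Fin t → Gsub) j)
      = (Pi.single i (permSMulG π v) : Fin t → Gsub) j
  by_cases h : j = i
  · subst h; rw [Pi.single_eq_same, Pi.single_eq_same]
  · rw [Pi.single_eq_of_ne h, Pi.single_eq_of_ne h, h0]

end Aux

open scoped commutatorElement

/-- Let `𝒢` be a transitive subgroup of `S₅` and `t ≥ 0`. Every homomorphism from
`Gᵗ ⋊ 𝒢` (diagonal action) to a commutative group is trivial on the subgroup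
`Gᵗ ⋊ {1}`; equivalently, the commutator subgroup of `Gᵗ ⋊ 𝒢` contains `Gᵗ ⋊ {1}`. -/
theorem stmt10 (𝒢 : Subgroup (Equiv.Perm (Fin 5)))
    (htrans : ∀ i j : Fin 5, ∃ π ∈ 𝒢, π i = j) (t : ℕ) :
    (∀ (C : Type*) [CommGroup C]
      (f : SemidirectProduct (Multiplicative (Fin t → Gsub)) 𝒢 (diagAut 𝒢 t) →* C)
      (n : Multiplicative (Fin t → Gsub)), f (SemidirectProduct.inl n) = 1) ∧
    (SemidirectProduct.inl (φ := diagAut 𝒢 t)).range ≤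
      commutator (SemidirectProduct (Multiplicative (Fin t → Gsub)) 𝒢 (diagAut 𝒢 t)) := by
  classical
  set SP := SemidirectProduct (Multiplicative (Fin t → Gsub)) 𝒢 (diagAut 𝒢 t) with hSP
  -- the key commutator computation
  have comm_calc : ∀ (π : Equiv.Perm (Fin 5)) (hπ : π ∈ 𝒢) (i : Fin t) (v : Gsub),
      (SemidirectProduct.inl (φ := diagAut 𝒢 t)
        (Multiplicative.ofAdd (Pi.single i (permSMulG π v + v))) : SP)
      = ⁅(SemidirectProduct.inr (⟨π, hπ⟩ : 𝒢) : SP),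
          SemidirectProduct.inl (Multiplicative.ofAdd (Pi.single i v))⁆ := by
    intro π hπ i v
    have haut : (SemidirectProduct.inr (⟨π, hπ⟩ : 𝒢) : SP)
        * SemidirectProduct.inl (Multiplicative.ofAdd (Pi.single i v))
        * (SemidirectProduct.inr (⟨π, hπ⟩ : 𝒢))⁻¹
        = SemidirectProduct.inl
            ((diagAut 𝒢 t (⟨π, hπ⟩ : 𝒢)) (Multiplicative.ofAdd (Pi.single i v))) := by
      rw [← map_inv]
      exact (SemidirectProduct.inl_aut _ _).symm
    rw [commutatorElement_def, haut, ← map_inv, ← map_mul]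
    congr 1
    have hφ : (diagAut 𝒢 t (⟨π, hπ⟩ : 𝒢)) (Multiplicative.ofAdd (Pi.single i v))
        = Multiplicative.ofAdd (Pi.single i (permSMulG π v)) := by
      show Multiplicative.ofAdd (diagAddAut π t (Pi.single i v))
          = Multiplicative.ofAdd (Pi.single i (permSMulG π v))
      rw [diagAddAut_single]
    rw [hφ]
    show Multiplicative.ofAdd (Pi.single i (permSMulG π v + v) : Fin t → Gsub)
        = Multiplicative.ofAdd (Pi.single i (permSMulG π v) : Fin t → Gsub)
          * (Multiplicative.ofAdd (Pi.single i v : Fin t → Gsub))⁻¹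
    rw [← ofAdd_neg, ← ofAdd_add]
    congr 1
    rw [← Pi.single_neg, ← Pi.single_add, gsub_neg_eq]
  -- membership in the commutator subgroup
  have part2 : (SemidirectProduct.inl (φ := diagAut 𝒢 t)).range ≤ commutator SP := by
    rintro x ⟨m, rfl⟩
    set K : AddSubgroup (Fin t → Gsub) :=
      ((commutator SP).comap (SemidirectProduct.inl (φ := diagAut 𝒢 t))).toAddSubgroup'
      with hK
    have hmemK : ∀ n : Fin t → Gsub, n ∈ K ↔
        (SemidirectProduct.inl (φ := diagAut 𝒢 t) (Multiplicative.ofAdd n) : SP)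
          ∈ commutator SP := by
      intro n
      rfl
    have hsingle : ∀ (i : Fin t) (w : Gsub), Pi.single i w ∈ K := by
      intro i w
      have hL : ∀ π ∈ 𝒢, ∀ v : Gsub,
          permSMulG π v + v ∈ K.comap (AddMonoidHom.single (fun _ : Fin t => Gsub) i) := by
        intro π hπ v
        have : Pi.single i (permSMulG π v + v) ∈ K := by
          rw [hmemK, comm_calc π hπ i v]
          exact Subgroup.commutator_mem_commutator (Subgroup.mem_top _) (Subgroup.mem_top _)
        exact this
      exact core_lemma 𝒢 htrans _ hL w
    have hn : (Multiplicative.toAdd m) ∈ K := by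
      rw [← Finset.univ_sum_single (Multiplicative.toAdd m)]
      exact AddSubgroup.sum_mem K (fun i _ => hsingle i _)
    exact (hmemK _).mp hn
  refine ⟨?_, part2⟩
  intro C _ f n
  have hker : commutator SP ≤ f.ker := by
    rw [commutator_def, Subgroup.commutator_le]
    intro g _ h _
    rw [MonoidHom.mem_ker, map_commutatorElement]
    exact commutatorElement_eq_one_iff_mul_comm.mpr (mul_comm _ _)
  have : SemidirectProduct.inl (φ := diagAut 𝒢 t) n ∈ commutator SP :=
    part2 ⟨n, rfl⟩
  exact hker this
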